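/- In the 20-dimensional space S³(ℂ⁴) with the standard action of the Lie algebra 𝔟 of upper-triangular traceless 4×4 matrices, there is exactly one 𝔟-invariant subspace of dimension 1 (namely the span of e₁³), exactly one of dimension 2 (the span of {e₁³, e₁²e₂}), and exactly two of dimension 3 (the spans of {e₁³, e₁²e₂, e₁²e₃} and of {e₁³, e₁²e₂, e₁e₂²}). -/

import Mathlib

set_option maxRecDepth 40000
set_option maxHeartbeats 1000000

open scoped BigOperators

/-- Evaluation of a `3`-tensor at fixed indices, as a linear functional. -/
noncomputable def ev3 (i j k : Fin 4) : (Fin 4 → Fin 4 → Fin 4 → ℂ) →ₗ[ℂ] ℂ :=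
  (LinearMap.proj k) ∘ₗ (LinearMap.proj j) ∘ₗ (LinearMap.proj i)

/-- `S³(ℂ⁴)`: the symmetric tensors inside `(ℂ⁴)⊗³`. -/
noncomputable def Sym3 : Submodule ℂ (Fin 4 → Fin 4 → Fin 4 → ℂ) :=
  ⨅ p : Fin 4 × Fin 4 × Fin 4,
    LinearMap.ker (ev3 p.1 p.2.1 p.2.2 - ev3 p.2.1 p.1 p.2.2) ⊓
    LinearMap.ker (ev3 p.1 p.2.1 p.2.2 - ev3 p.1 p.2.2 p.2.1)

/-- The derivation action of a matrix `X ∈ 𝔤𝔩₄` on `(ℂ⁴)⊗³`: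
`X·(v₁⊗v₂⊗v₃) = Xv₁⊗v₂⊗v₃ + v₁⊗Xv₂⊗v₃ + v₁⊗v₂⊗Xv₃`, in coordinates. -/
noncomputable def der3 (X : Matrix (Fin 4) (Fin 4) ℂ) (T : Fin 4 → Fin 4 → Fin 4 → ℂ) :
    Fin 4 → Fin 4 → Fin 4 → ℂ :=
  fun i j k => (∑ a, X i a * T a j k) + (∑ a, X j a * T i a k) + (∑ a, X k a * T i j a)

/-- `X` lies in the Borel subalgebra `𝔟 ⊂ 𝔰𝔩₄` of upper-triangular traceless matrices. -/
def InBorel (X : Matrix (Fin 4) (Fin 4) ℂ) : Prop :=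
  (∀ i j : Fin 4, j < i → X i j = 0) ∧ Matrix.trace X = 0

/-- The (symmetric tensor corresponding to the) monomial `e₁³`. -/
def v300 : Fin 4 → Fin 4 → Fin 4 → ℂ :=
  fun i j k => if i = 0 ∧ j = 0 ∧ k = 0 then 1 else 0

/-- The monomial `e₁²e₂` as a symmetric tensor. -/
def v210 : Fin 4 → Fin 4 → Fin 4 → ℂ := fun i j k =>
  if (i = 0 ∧ j = 0 ∧ k = 1) ∨ (i = 0 ∧ j = 1 ∧ k = 0) ∨ (i = 1 ∧ j = 0 ∧ k = 0)
  then 1 else 0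

/-- The monomial `e₁²e₃` as a symmetric tensor. -/
def v201 : Fin 4 → Fin 4 → Fin 4 → ℂ := fun i j k =>
  if (i = 0 ∧ j = 0 ∧ k = 2) ∨ (i = 0 ∧ j = 2 ∧ k = 0) ∨ (i = 2 ∧ j = 0 ∧ k = 0)
  then 1 else 0

/-- The monomial `e₁e₂²` as a symmetric tensor. -/
def v120 : Fin 4 → Fin 4 → Fin 4 → ℂ := fun i j k =>
  if (i = 0 ∧ j = 1 ∧ k = 1) ∨ (i = 1 ∧ j = 0 ∧ k = 1) ∨ (i = 1 ∧ j = 1 ∧ k = 0)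
  then 1 else 0

namespace BorelS3

abbrev T3 := Fin 4 × Fin 4 × Fin 4
abbrev V3 := Fin 4 → Fin 4 → Fin 4 → ℂ

/-- sort a triple -/
def nf : T3 → T3 := fun t =>
  let p := t.1; let q := t.2.1; let r := t.2.2
  if p ≤ q then
    if q ≤ r then (p,q,r) else if p ≤ r then (p,r,q) else (r,p,q)
  else
    if p ≤ r then (q,p,r) else if q ≤ r then (q,r,p) else (r,q,p)

noncomputable def mono (m : T3) : V3 := fun p q r => if nf (p,q,r) = nf m then 1 else 0

def cnt (b : Fin 4) (m : T3) : ℕ :=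
  (if m.1 = b then 1 else 0) + (if m.2.1 = b then 1 else 0) + (if m.2.2 = b then 1 else 0)

def tgt (a b : Fin 4) (m : T3) : T3 :=
  if m.1 = b then nf (a, m.2.1, m.2.2) else if m.2.1 = b then nf (m.1, a, m.2.2)
  else nf (m.1, m.2.1, a)

def ht (m : T3) : ℕ := m.1.val + m.2.1.val + m.2.2.val

def pair3 (a b : Fin 4) : Prop := (a,b) = (0,1) ∨ (a,b) = (1,2) ∨ (a,b) = (2,3)

instance pair3.dec (a b : Fin 4) : Decidable (pair3 a b) := by unfold pair3; infer_instance

def Emat (a b : Fin 4) : Matrix (Fin 4) (Fin 4) ℂ :=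
  Matrix.of fun i j => if i = a ∧ j = b then 1 else 0

def wtZ : Fin 4 → ℤ := ![25, 5, 1, -31]
def w3 : T3 → ℤ := fun t => wtZ t.1 + wtZ t.2.1 + wtZ t.2.2
noncomputable def Hmat : Matrix (Fin 4) (Fin 4) ℂ := Matrix.diagonal fun i => (wtZ i : ℂ)
def Lw : List ℤ := [75, 55, 51, 35, 31, 27, 19, 15, 11, 7, 3, -1, -5, -21, -25, -29, -37, -57, -61, -93]

/- decidable facts -/
lemma nf_idem : ∀ t : T3, nf (nf t) = nf t := by decide
lemma nf_swap1 : ∀ p q r : Fin 4, nf (p,q,r) = nf (q,p,r) := by decide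
lemma nf_swap2 : ∀ p q r : Fin 4, nf (p,q,r) = nf (p,r,q) := by decide
lemma w3_eq_iff : ∀ t s : T3, w3 t = w3 s ↔ nf t = nf s := by decide
lemma w3_mem : ∀ t : T3, w3 t ∈ Lw := by decide
lemma Kne : ∀ t : T3, ((Lw.erase (w3 t)).map (fun μ => w3 t - μ)).prod ≠ 0 := by decide
lemma tgt_sorted : ∀ a b (m : T3), nf (tgt a b m) = tgt a b m := by decide
lemma cnt_tgt_ne : ∀ a b (m : T3), pair3 a b → cnt b m ≠ 0 → cnt a (tgt a b m) ≠ 0 := by decide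
lemma ht_tgt : ∀ a b (m : T3), pair3 a b → cnt b m ≠ 0 → ht (tgt a b m) + 1 = ht m := by decide
lemma ne000_cnt : ∀ m : T3, m ≠ (0,0,0) → (cnt 1 m ≠ 0 ∨ cnt 2 m ≠ 0 ∨ cnt 3 m ≠ 0) := by decide
lemma ht_le2_cases : ∀ m : T3, nf m = m → ht m ≤ 2 →
    m = (0,0,0) ∨ m = (0,0,1) ∨ m = (0,0,2) ∨ m = (0,1,1) := by decide

lemma gdec (a b : Fin 4) (hab : pair3 a b) (m : T3) (hm : cnt b m ≠ 0) (p q r : Fin 4) :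
    ((if p = a ∧ nf (b, q, r) = nf m then 1 else 0) +
     (if q = a ∧ nf (p, b, r) = nf m then 1 else 0) +
     (if r = a ∧ nf (p, q, b) = nf m then 1 else 0) : ℕ)
    = cnt a (tgt a b m) * (if nf (p,q,r) = nf (tgt a b m) then 1 else 0) := by
  revert a b m p q r
  have : ∀ a b : Fin 4, ((a,b) = ((0:Fin 4),(1:Fin 4)) ∨ (a,b) = (1,2) ∨ (a,b) = (2,3)) →
      ∀ (m : T3), cnt b m ≠ 0 → ∀ (p q r : Fin 4),
      ((if p = a ∧ nf (b, q, r) = nf m then 1 else 0) +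
       (if q = a ∧ nf (p, b, r) = nf m then 1 else 0) +
       (if r = a ∧ nf (p, q, b) = nf m then 1 else 0) : ℕ)
      = cnt a (tgt a b m) * (if nf (p,q,r) = nf (tgt a b m) then 1 else 0) := by decide
  intro a b hab m hm p q r
  exact this a b hab m hm p q r

/- sums against special matrices -/
lemma sumE (a b : Fin 4) (x : Fin 4) (f : Fin 4 → ℂ) :
    (∑ c, Emat a b x c * f c) = if x = a then f b else 0 := by
  have h : ∀ c, Emat a b x c * f c = if c = b then (if x = a then f c else 0) else 0 := by
    intro c; simp only [Emat, Matrix.of_apply]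
    by_cases h1 : x = a <;> by_cases h2 : c = b <;> simp [h1, h2]
  simp only [h, Finset.sum_ite_eq' Finset.univ b, Finset.mem_univ, if_true]

lemma sumD (x : Fin 4) (f : Fin 4 → ℂ) :
    (∑ c, Hmat x c * f c) = (wtZ x : ℂ) * f x := by
  have h : ∀ c, Hmat x c * f c = if c = x then (wtZ x : ℂ) * f c else 0 := by
    intro c; by_cases h1 : x = c
    · subst h1; simp [Hmat, Matrix.diagonal]
    · simp [Hmat, Matrix.diagonal, h1, Ne.symm h1]
  simp only [h, Finset.sum_ite_eq' Finset.univ x, Finset.mem_univ, if_true]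

/- the two key operator identities -/
lemma der3E (a b : Fin 4) (hab : pair3 a b) (m : T3) (hm : cnt b m ≠ 0) :
    der3 (Emat a b) (mono m) = (cnt a (tgt a b m) : ℂ) • mono (tgt a b m) := by
  funext p q r
  show (∑ c, Emat a b p c * mono m c q r) + (∑ c, Emat a b q c * mono m p c r)
      + (∑ c, Emat a b r c * mono m p q c) = _
  rw [sumE, sumE, sumE]
  have hnat := gdec a b hab m hm p q r
  have hc : ((((if p = a ∧ nf (b, q, r) = nf m then 1 else 0) +
     (if q = a ∧ nf (p, b, r) = nf m then 1 else 0) +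
     (if r = a ∧ nf (p, q, b) = nf m then 1 else 0) : ℕ) : ℂ))
    = ((cnt a (tgt a b m) * (if nf (p,q,r) = nf (tgt a b m) then 1 else 0) : ℕ) : ℂ) := by
    exact_mod_cast congrArg (Nat.cast : ℕ → ℂ) hnat
  push_cast at hc
  simpa [mono, ite_and, Pi.smul_apply, smul_eq_mul, apply_ite (Nat.cast : ℕ → ℂ)] using hc

lemma der3H (T : V3) (p q r : Fin 4) :
    der3 Hmat T p q r = (w3 (p,q,r) : ℂ) * T p q r := by
  show (∑ c, Hmat p c * T c q r) + (∑ c, Hmat q c * T p c r) + (∑ c, Hmat r c * T p q c) = _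
  rw [sumD, sumD, sumD]
  show _ = ((wtZ p + wtZ q + wtZ r : ℤ) : ℂ) * T p q r
  push_cast
  ring

/- Borel membership -/
lemma inBorel_Emat (a b : Fin 4) (hab : pair3 a b) : InBorel (Emat a b) := by
  have hlt : a < b := by rcases hab with h|h|h <;> (injection h with h1 h2; subst h1; subst h2; decide)
  constructor
  · intro i j hji
    simp only [Emat, Matrix.of_apply, ite_eq_right_iff]
    rintro ⟨rfl, rfl⟩
    exact absurd (hlt.trans hji) (lt_irrefl _)
  · have : ∀ i : Fin 4, Emat a b i i = 0 := by
      intro i; simp only [Emat, Matrix.of_apply, ite_eq_right_iff]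
      rintro ⟨rfl, rfl⟩; exact absurd hlt (lt_irrefl _)
    simp [Matrix.trace, Matrix.diag, this]

lemma inBorel_Hmat : InBorel Hmat := by
  constructor
  · intro i j hji
    have : i ≠ j := fun h => by subst h; exact lt_irrefl _ hji
    simp [Hmat, Matrix.diagonal_apply_ne' _ (Ne.symm this)]
  · show ∑ i, Matrix.diagonal _ i i = 0
    simp [Matrix.diagonal_apply_eq, Fin.sum_univ_four, wtZ]
    norm_num
/- Sym3 membership -/
lemma mem_Sym3_iff (T : V3) :
    T ∈ Sym3 ↔ ∀ p q r : Fin 4, T p q r = T q p r ∧ T p q r = T p r q := by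
  constructor
  · intro h p q r
    have h2 := Submodule.mem_iInf _ |>.mp h (p, q, r)
    obtain ⟨h3, h4⟩ := Submodule.mem_inf.mp h2
    have e1 := LinearMap.mem_ker.mp h3
    have e2 := LinearMap.mem_ker.mp h4
    simp only [LinearMap.sub_apply, ev3, LinearMap.coe_comp, Function.comp_apply,
      LinearMap.proj_apply, sub_eq_zero] at e1 e2
    exact ⟨e1, e2⟩
  · intro h
    refine (Submodule.mem_iInf _).mpr fun t => Submodule.mem_inf.mpr ⟨?_, ?_⟩ <;>
      · refine LinearMap.mem_ker.mpr ?_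
        simp only [LinearMap.sub_apply, ev3, LinearMap.coe_comp, Function.comp_apply,
          LinearMap.proj_apply, sub_eq_zero]
        first
          | exact (h t.1 t.2.1 t.2.2).1
          | exact (h t.1 t.2.1 t.2.2).2

lemma nf_val (T : V3) (hT : T ∈ Sym3) (t : T3) :
    T t.1 t.2.1 t.2.2 = T (nf t).1 (nf t).2.1 (nf t).2.2 := by
  have h := (mem_Sym3_iff T).mp hT
  obtain ⟨p, q, r⟩ := t
  show T p q r = _
  unfold nf
  dsimp only
  split_ifs <;> dsimp only
  · exact (h p q r).2
  · calc T p q r = T p r q := (h p q r).2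
      _ = T r p q := (h p r q).1
  · exact (h p q r).1
  · calc T p q r = T q p r := (h p q r).1
      _ = T q r p := (h q p r).2
  · calc T p q r = T p r q := (h p q r).2
      _ = T r p q := (h p r q).1
      _ = T r q p := (h r p q).2

lemma sym_nf_eq (T : V3) (hT : T ∈ Sym3) {t s : T3} (h : nf t = nf s) :
    T t.1 t.2.1 t.2.2 = T s.1 s.2.1 s.2.2 := by
  rw [nf_val T hT t, h, ← nf_val T hT s]

lemma mono_mem_Sym3 (m : T3) : mono m ∈ Sym3 := by
  rw [mem_Sym3_iff]
  intro p q r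
  constructor
  · show (if nf (p,q,r) = nf m then (1:ℂ) else 0) = (if nf (q,p,r) = nf m then 1 else 0)
    rw [nf_swap1]
  · show (if nf (p,q,r) = nf m then (1:ℂ) else 0) = (if nf (p,r,q) = nf m then 1 else 0)
    rw [nf_swap2]

/- spectral projections -/
noncomputable def Fl (l : List ℤ) (T : V3) : V3 :=
  l.foldr (fun μ U => der3 Hmat U - (μ : ℂ) • U) T

lemma Fl_nil (T : V3) : Fl [] T = T := rfl

lemma Fl_cons (μ : ℤ) (l : List ℤ) (T : V3) :
    Fl (μ :: l) T = der3 Hmat (Fl l T) - (μ : ℂ) • Fl l T := rfl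

lemma Fl_mem (W : Submodule ℂ V3) (hWH : ∀ T ∈ W, der3 Hmat T ∈ W)
    (l : List ℤ) (T : V3) (hT : T ∈ W) : Fl l T ∈ W := by
  induction l with
  | nil => exact hT
  | cons μ l ih => rw [Fl_cons]; exact W.sub_mem (hWH _ ih) (W.smul_mem _ ih)

lemma Fl_apply (l : List ℤ) (T : V3) (p q r : Fin 4) :
    Fl l T p q r = ((l.map (fun μ => w3 (p,q,r) - μ)).prod : ℂ) * T p q r := by
  induction l with
  | nil => simp [Fl_nil]
  | cons μ l ih =>
    rw [Fl_cons]
    simp only [Pi.sub_apply, Pi.smul_apply, smul_eq_mul, der3H, ih, List.map_cons,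
      List.prod_cons]
    push_cast
    ring

lemma comp_mem (W : Submodule ℂ V3) (hWS : W ≤ Sym3)
    (hWH : ∀ T ∈ W, der3 Hmat T ∈ W) (T : V3) (hT : T ∈ W) (m : T3) :
    (T m.1 m.2.1 m.2.2) • mono m ∈ W := by
  set K : ℤ := ((Lw.erase (w3 m)).map fun μ => w3 m - μ).prod with hK
  have hKne : (K : ℂ) ≠ 0 := Int.cast_ne_zero.mpr (Kne m)
  have key : Fl (Lw.erase (w3 m)) T = (K : ℂ) • ((T m.1 m.2.1 m.2.2) • mono m) := by
    funext p q r
    rw [Fl_apply]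
    by_cases h : w3 (p,q,r) = w3 m
    · have hnf : nf (p,q,r) = nf m := (w3_eq_iff _ _).mp h
      have hv : T p q r = T m.1 m.2.1 m.2.2 := sym_nf_eq T (hWS hT) hnf
      have hmono : mono m p q r = 1 := by simp [mono, hnf]
      simp only [Pi.smul_apply, smul_eq_mul, hmono, h, hv, mul_one, hK]
    · have hzero : ((Lw.erase (w3 m)).map fun μ => w3 (p,q,r) - μ).prod = 0 := by
        apply List.prod_eq_zero
        rw [List.mem_map]
        exact ⟨w3 (p,q,r), (List.mem_erase_of_ne h).mpr (w3_mem _), sub_self _⟩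
      have hmono : mono m p q r = 0 := by
        simp only [mono, ite_eq_right_iff]
        intro hnf
        exact absurd ((w3_eq_iff _ _).mpr hnf) h
      simp [hzero, hmono]
  have h1 := Fl_mem W hWH (Lw.erase (w3 m)) T hT
  rw [key] at h1
  have h2 := W.smul_mem ((K : ℂ))⁻¹ h1
  rwa [inv_smul_smul₀ hKne] at h2

/- decomposition into monomials -/
def SF : Finset T3 := Finset.univ.filter fun t => nf t = t

lemma nf_mem_SF (t : T3) : nf t ∈ SF := by
  simp [SF, nf_idem]

lemma Tsum (T : V3) (hT : T ∈ Sym3) :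
    T = ∑ m ∈ SF, (T m.1 m.2.1 m.2.2) • mono m := by
  funext p q r
  have hpt : ∀ m ∈ SF, ((T m.1 m.2.1 m.2.2) • mono m) p q r
      = if nf (p,q,r) = m then T m.1 m.2.1 m.2.2 else 0 := by
    intro m hm
    have hs : nf m = m := (Finset.mem_filter.mp hm).2
    show (T m.1 m.2.1 m.2.2) * (if nf (p,q,r) = nf m then 1 else 0) = _
    rw [hs]
    by_cases h : nf (p,q,r) = m <;> simp [h]
  have : (∑ m ∈ SF, (T m.1 m.2.1 m.2.2) • mono m) p q r
      = ∑ m ∈ SF, ((T m.1 m.2.1 m.2.2) • mono m) p q r := by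
    simp [Finset.sum_apply]
  rw [this, Finset.sum_congr rfl hpt, Finset.sum_ite_eq SF (nf (p,q,r))
    (fun m => T m.1 m.2.1 m.2.2), if_pos (nf_mem_SF _)]
  exact sym_nf_eq T hT (nf_idem (p,q,r)).symm

/- W is spanned by the monomials it contains -/
noncomputable def Sset (W : Submodule ℂ V3) : Finset T3 :=
  @Finset.filter _ (fun m => mono m ∈ W) (Classical.decPred _) SF

lemma Sset_sorted (W : Submodule ℂ V3) : ∀ m ∈ Sset W, nf m = m := by
  intro m hm
  have h1 := (@Finset.mem_filter _ _ (Classical.decPred _) _ _).mp hm |>.1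
  exact (Finset.mem_filter.mp h1).2

lemma Sset_mono_mem (W : Submodule ℂ V3) : ∀ m ∈ Sset W, mono m ∈ W := by
  intro m hm; exact ((@Finset.mem_filter _ _ (Classical.decPred _) _ _).mp hm).2

lemma W_eq_span (W : Submodule ℂ V3) (hWS : W ≤ Sym3)
    (hWH : ∀ T ∈ W, der3 Hmat T ∈ W) :
    W = Submodule.span ℂ (mono '' ↑(Sset W)) := by
  apply le_antisymm
  · intro T hT
    have hrepr := Tsum T (hWS hT)
    rw [hrepr]
    apply Submodule.sum_mem
    intro m hm
    rcases eq_or_ne (T m.1 m.2.1 m.2.2) 0 with h0 | h0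
    · simp [h0]
    · have hc := comp_mem W hWS hWH T hT m
      have hmem : mono m ∈ W := by
        have h2 := W.smul_mem (T m.1 m.2.1 m.2.2)⁻¹ hc
        rwa [inv_smul_smul₀ h0] at h2
      apply Submodule.smul_mem
      apply Submodule.subset_span
      exact Set.mem_image_of_mem mono (by
        simp only [Sset, Finset.mem_coe]
        exact (@Finset.mem_filter _ _ (Classical.decPred _) _ _).mpr ⟨hm, hmem⟩)
  · rw [Submodule.span_le]
    intro x hx
    obtain ⟨m, hm, rfl⟩ := hx
    exact Sset_mono_mem W m hm

/- linear independence of the sorted monomials -/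
abbrev Srt := {t : T3 // nf t = t}

noncomputable def Phi : V3 →ₗ[ℂ] (Srt → ℂ) :=
  LinearMap.pi fun m => ev3 m.1.1 m.1.2.1 m.1.2.2

lemma mono_eval (m t : Srt) :
    mono m.1 t.1.1 t.1.2.1 t.1.2.2 = if t = m then 1 else 0 := by
  show (if nf (t.1.1, t.1.2.1, t.1.2.2) = nf m.1 then (1:ℂ) else 0) = _
  have ht : (t.1.1, t.1.2.1, t.1.2.2) = t.1 := rfl
  rw [ht, t.2, m.2]
  exact if_congr ⟨fun h => Subtype.ext h, fun h => congrArg Subtype.val h⟩ rfl rfl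

lemma mono_li : LinearIndependent ℂ (fun m : Srt => mono m.1) := by
  apply LinearIndependent.of_comp Phi
  have he : (⇑Phi ∘ fun m : Srt => mono m.1) = fun m : Srt => Pi.single m (1:ℂ) := by
    funext m t
    show Phi (mono m.1) t = _
    simp only [Phi, LinearMap.pi_apply, ev3, LinearMap.coe_comp, Function.comp_apply,
      LinearMap.proj_apply]
    rw [mono_eval m t, Pi.single_apply]
  rw [he]
  have hb := (Pi.basisFun ℂ Srt).linearIndependent
  rwa [show ⇑(Pi.basisFun ℂ Srt) = fun m : Srt => Pi.single m (1:ℂ) from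
    funext fun m => Pi.basisFun_apply ℂ Srt m] at hb

lemma mono_inj_sorted {m m' : T3} (hm : nf m = m) (hm' : nf m' = m')
    (h : mono m = mono m') : m = m' := by
  have h1 := congrFun (congrFun (congrFun h m'.1) m'.2.1) m'.2.2
  have hp : ((m'.1, m'.2.1, m'.2.2) : T3) = m' := rfl
  simp only [mono, hp] at h1
  by_cases hc : nf m' = nf m
  · rw [← hm, ← hm', hc]
  · rw [if_neg hc] at h1
    simp at h1

lemma finrank_span_mono (s : Finset T3) (hs : ∀ m ∈ s, nf m = m) :
    Module.finrank ℂ (Submodule.span ℂ (mono '' ↑s) : Submodule ℂ V3) = s.card := by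
  have hsub : mono '' ↑s ⊆ Set.range fun m : Srt => mono m.1 := by
    rintro x ⟨m, hm, rfl⟩
    exact ⟨⟨m, hs m hm⟩, rfl⟩
  have hset : LinearIndependent ℂ ((↑) : ↥(mono '' ↑s) → V3) :=
    (mono_li.linearIndepOn_id).mono hsub
  haveI : Fintype ↥(mono '' ↑s) := (s.finite_toSet.image mono).fintype
  rw [finrank_span_set_eq_card hset]
  rw [Set.toFinset_image, Finset.toFinset_coe]
  apply Finset.card_image_of_injOn
  intro a ha b hb hab
  exact mono_inj_sorted (hs a ha) (hs b hb) hab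

/- identities for the derivation action of a general upper-triangular matrix
on the four low monomials -/
section gens
variable (X : Matrix (Fin 4) (Fin 4) ℂ) (hX : ∀ i j : Fin 4, j < i → X i j = 0)

lemma d300 (hX : ∀ i j : Fin 4, j < i → X i j = 0) :
    der3 X v300 = (3 * X 0 0) • v300 := by
  have h10 : X 1 0 = 0 := hX 1 0 (by decide)
  have h20 : X 2 0 = 0 := hX 2 0 (by decide)
  have h30 : X 3 0 = 0 := hX 3 0 (by decide)
  funext p q r
  fin_cases p <;> fin_cases q <;> fin_cases r <;>
    simp [der3, v300, Fin.sum_univ_four, h10, h20, h30] <;> ring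

lemma d210 (hX : ∀ i j : Fin 4, j < i → X i j = 0) :
    der3 X v210 = (2 * X 0 0 + X 1 1) • v210 + (3 * X 0 1) • v300 := by
  have h10 : X 1 0 = 0 := hX 1 0 (by decide)
  have h20 : X 2 0 = 0 := hX 2 0 (by decide)
  have h30 : X 3 0 = 0 := hX 3 0 (by decide)
  have h21 : X 2 1 = 0 := hX 2 1 (by decide)
  have h31 : X 3 1 = 0 := hX 3 1 (by decide)
  funext p q r
  fin_cases p <;> fin_cases q <;> fin_cases r <;>
    simp [der3, v210, v300, Fin.sum_univ_four, h10, h20, h30, h21, h31] <;> ring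

lemma d201 (hX : ∀ i j : Fin 4, j < i → X i j = 0) :
    der3 X v201 = (2 * X 0 0 + X 2 2) • v201 + (X 1 2) • v210 + (3 * X 0 2) • v300 := by
  have h10 : X 1 0 = 0 := hX 1 0 (by decide)
  have h20 : X 2 0 = 0 := hX 2 0 (by decide)
  have h30 : X 3 0 = 0 := hX 3 0 (by decide)
  have h21 : X 2 1 = 0 := hX 2 1 (by decide)
  have h31 : X 3 1 = 0 := hX 3 1 (by decide)
  have h32 : X 3 2 = 0 := hX 3 2 (by decide)
  funext p q r
  fin_cases p <;> fin_cases q <;> fin_cases r <;>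
    simp [der3, v201, v210, v300, Fin.sum_univ_four, h10, h20, h30, h21, h31, h32] <;> ring

lemma d120 (hX : ∀ i j : Fin 4, j < i → X i j = 0) :
    der3 X v120 = (X 0 0 + 2 * X 1 1) • v120 + (2 * X 0 1) • v210 := by
  have h10 : X 1 0 = 0 := hX 1 0 (by decide)
  have h20 : X 2 0 = 0 := hX 2 0 (by decide)
  have h30 : X 3 0 = 0 := hX 3 0 (by decide)
  have h21 : X 2 1 = 0 := hX 2 1 (by decide)
  have h31 : X 3 1 = 0 := hX 3 1 (by decide)
  funext p q r
  fin_cases p <;> fin_cases q <;> fin_cases r <;>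
    simp [der3, v120, v210, Fin.sum_univ_four, h10, h20, h30, h21, h31] <;> ring

end gens

/- bridges between the explicit monomials and `mono` -/
lemma v300_eq : v300 = mono (0,0,0) := by
  have h : ∀ p q r : Fin 4, (p = 0 ∧ q = 0 ∧ r = 0) ↔ nf (p,q,r) = nf (0,0,0) := by decide
  funext p q r
  exact if_congr (h p q r) rfl rfl

lemma v210_eq : v210 = mono (0,0,1) := by
  have h : ∀ p q r : Fin 4,
      ((p = 0 ∧ q = 0 ∧ r = 1) ∨ (p = 0 ∧ q = 1 ∧ r = 0) ∨ (p = 1 ∧ q = 0 ∧ r = 0))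
        ↔ nf (p,q,r) = nf (0,0,1) := by decide
  funext p q r
  exact if_congr (h p q r) rfl rfl

lemma v201_eq : v201 = mono (0,0,2) := by
  have h : ∀ p q r : Fin 4,
      ((p = 0 ∧ q = 0 ∧ r = 2) ∨ (p = 0 ∧ q = 2 ∧ r = 0) ∨ (p = 2 ∧ q = 0 ∧ r = 0))
        ↔ nf (p,q,r) = nf (0,0,2) := by decide
  funext p q r
  exact if_congr (h p q r) rfl rfl

lemma v120_eq : v120 = mono (0,1,1) := by
  have h : ∀ p q r : Fin 4,
      ((p = 0 ∧ q = 1 ∧ r = 1) ∨ (p = 1 ∧ q = 0 ∧ r = 1) ∨ (p = 1 ∧ q = 1 ∧ r = 0))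
        ↔ nf (p,q,r) = nf (0,1,1) := by decide
  funext p q r
  exact if_congr (h p q r) rfl rfl

/- linearity of der3 -/
lemma der3_zero (X : Matrix (Fin 4) (Fin 4) ℂ) : der3 X (0 : V3) = 0 := by
  funext p q r
  simp [der3]

lemma der3_add (X : Matrix (Fin 4) (Fin 4) ℂ) (T T' : V3) :
    der3 X (T + T') = der3 X T + der3 X T' := by
  funext p q r
  simp [der3, Fin.sum_univ_four, Pi.add_apply]
  ring

lemma der3_smul (X : Matrix (Fin 4) (Fin 4) ℂ) (c : ℂ) (T : V3) :
    der3 X (c • T) = c • der3 X T := by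
  funext p q r
  simp [der3, Fin.sum_univ_four, Pi.smul_apply, smul_eq_mul]
  ring

/- closure of Sset under raising moves -/
lemma Sclosed (W : Submodule ℂ V3)
    (hWinv : ∀ X, InBorel X → ∀ T ∈ W, der3 X T ∈ W) :
    ∀ m ∈ Sset W, ∀ a b : Fin 4, pair3 a b → cnt b m ≠ 0 → tgt a b m ∈ Sset W := by
  intro m hm a b hab hcnt
  have hmono : mono m ∈ W := Sset_mono_mem W m hm
  have h1 : der3 (Emat a b) (mono m) ∈ W := hWinv _ (inBorel_Emat a b hab) _ hmono
  rw [der3E a b hab m hcnt] at h1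
  have hc : ((cnt a (tgt a b m) : ℕ) : ℂ) ≠ 0 :=
    Nat.cast_ne_zero.mpr (cnt_tgt_ne a b m hab hcnt)
  have h2 := W.smul_mem (((cnt a (tgt a b m) : ℕ) : ℂ))⁻¹ h1
  rw [inv_smul_smul₀ hc] at h2
  refine (@Finset.mem_filter _ _ (Classical.decPred _) _ _).mpr ⟨?_, h2⟩
  simp [SF, tgt_sorted]

/- chain bound -/
lemma ht_bound (s : Finset T3)
    (hcl : ∀ m ∈ s, ∀ a b : Fin 4, pair3 a b → cnt b m ≠ 0 → tgt a b m ∈ s) :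
    ∀ n : ℕ, ∀ m ∈ s, n ≤ ht m →
      ∃ u : Finset T3, u ⊆ s ∧ u.card = n + 1 ∧ ∀ x ∈ u, ht x ≤ ht m := by
  intro n
  induction n with
  | zero =>
    intro m hm _
    refine ⟨{m}, Finset.singleton_subset_iff.mpr hm, Finset.card_singleton m, ?_⟩
    intro x hx
    rw [Finset.mem_singleton] at hx
    subst hx; exact le_rfl
  | succ n ih =>
    intro m hm hn
    have h0 : m ≠ ((0,0,0) : T3) := by
      rintro rfl
      simp [ht] at hn
    have hmv : ∃ a b : Fin 4, pair3 a b ∧ cnt b m ≠ 0 := by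
      rcases ne000_cnt m h0 with h | h | h
      exacts [⟨0, 1, Or.inl rfl, h⟩, ⟨1, 2, Or.inr (Or.inl rfl), h⟩,
        ⟨2, 3, Or.inr (Or.inr rfl), h⟩]
    obtain ⟨a, b, hab, hc⟩ := hmv
    have hm' : tgt a b m ∈ s := hcl m hm a b hab hc
    have hht : ht (tgt a b m) + 1 = ht m := ht_tgt a b m hab hc
    obtain ⟨u, hus, hcard, hbd⟩ := ih (tgt a b m) hm' (by omega)
    refine ⟨insert m u, Finset.insert_subset hm hus, ?_, ?_⟩
    · rw [Finset.card_insert_of_notMem (fun hx => by have := hbd m hx; omega)]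
      omega
    · intro x hx
      rcases Finset.mem_insert.mp hx with rfl | hx
      · exact le_rfl
      · have := hbd x hx; omega

lemma ht_le (s : Finset T3)
    (hcl : ∀ m ∈ s, ∀ a b : Fin 4, pair3 a b → cnt b m ≠ 0 → tgt a b m ∈ s) :
    ∀ m ∈ s, ht m + 1 ≤ s.card := by
  intro m hm
  obtain ⟨u, hus, hcard, _⟩ := ht_bound s hcl (ht m) m hm le_rfl
  calc ht m + 1 = u.card := hcard.symm
    _ ≤ s.card := Finset.card_le_card hus

lemma S000 (s : Finset T3)
    (hcl : ∀ m ∈ s, ∀ a b : Fin 4, pair3 a b → cnt b m ≠ 0 → tgt a b m ∈ s)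
    (hne : s.Nonempty) : ((0,0,0) : T3) ∈ s := by
  obtain ⟨m, hm, hmin⟩ := s.exists_min_image ht hne
  by_cases h0 : m = ((0,0,0) : T3)
  · rwa [h0] at hm
  · exfalso
    have hmv : ∃ a b : Fin 4, pair3 a b ∧ cnt b m ≠ 0 := by
      rcases ne000_cnt m h0 with h | h | h
      exacts [⟨0, 1, Or.inl rfl, h⟩, ⟨1, 2, Or.inr (Or.inl rfl), h⟩,
        ⟨2, 3, Or.inr (Or.inr rfl), h⟩]
    obtain ⟨a, b, hab, hc⟩ := hmv
    have h1 := hmin _ (hcl m hm a b hab hc)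
    have h2 := ht_tgt a b m hab hc
    omega

/- extra decide facts -/
lemma ht_le1_cases : ∀ m : T3, nf m = m → ht m ≤ 1 → m = (0,0,0) ∨ m = (0,0,1) := by decide

/- candidate spans: contained in Sym3 -/
lemma v300_mem : v300 ∈ Sym3 := by rw [v300_eq]; exact mono_mem_Sym3 _
lemma v210_mem : v210 ∈ Sym3 := by rw [v210_eq]; exact mono_mem_Sym3 _
lemma v201_mem : v201 ∈ Sym3 := by rw [v201_eq]; exact mono_mem_Sym3 _
lemma v120_mem : v120 ∈ Sym3 := by rw [v120_eq]; exact mono_mem_Sym3 _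

/- candidate spans: finranks -/
lemma frA1 : Module.finrank ℂ (Submodule.span ℂ ({v300} : Set V3)) = 1 := by
  have himg : ({v300} : Set V3) = mono '' ↑({((0,0,0) : T3)} : Finset T3) := by
    simp [v300_eq]
  rw [himg, finrank_span_mono _ (by decide)]
  rfl

lemma frA2 : Module.finrank ℂ (Submodule.span ℂ ({v300, v210} : Set V3)) = 2 := by
  have himg : ({v300, v210} : Set V3)
      = mono '' ↑({(0,0,0), (0,0,1)} : Finset T3) := by
    simp [v300_eq, v210_eq, Set.image_insert_eq]
  rw [himg, finrank_span_mono _ (by decide)]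
  decide

lemma frA3 : Module.finrank ℂ (Submodule.span ℂ ({v300, v210, v201} : Set V3)) = 3 := by
  have himg : ({v300, v210, v201} : Set V3)
      = mono '' ↑({(0,0,0), (0,0,1), (0,0,2)} : Finset T3) := by
    simp [v300_eq, v210_eq, v201_eq, Set.image_insert_eq]
  rw [himg, finrank_span_mono _ (by decide)]
  decide

lemma frB3 : Module.finrank ℂ (Submodule.span ℂ ({v300, v210, v120} : Set V3)) = 3 := by
  have himg : ({v300, v210, v120} : Set V3)
      = mono '' ↑({(0,0,0), (0,0,1), (0,1,1)} : Finset T3) := by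
    simp [v300_eq, v210_eq, v120_eq, Set.image_insert_eq]
  rw [himg, finrank_span_mono _ (by decide)]
  decide

/- candidate spans: invariance -/
lemma invA1 (X : Matrix (Fin 4) (Fin 4) ℂ) (hB : InBorel X) :
    ∀ T ∈ Submodule.span ℂ ({v300} : Set V3),
      der3 X T ∈ Submodule.span ℂ ({v300} : Set V3) := by
  intro T hT
  induction hT using Submodule.span_induction with
  | mem x hx =>
    rw [Set.mem_singleton_iff] at hx
    subst hx
    rw [d300 X hB.1]
    exact Submodule.smul_mem _ _ (Submodule.subset_span rfl)
  | zero => rw [der3_zero]; exact Submodule.zero_mem _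
  | add x y hx hy ihx ihy => rw [der3_add]; exact Submodule.add_mem _ ihx ihy
  | smul c x hx ih => rw [der3_smul]; exact Submodule.smul_mem _ _ ih

lemma invA2 (X : Matrix (Fin 4) (Fin 4) ℂ) (hB : InBorel X) :
    ∀ T ∈ Submodule.span ℂ ({v300, v210} : Set V3),
      der3 X T ∈ Submodule.span ℂ ({v300, v210} : Set V3) := by
  intro T hT
  have m1 : v300 ∈ Submodule.span ℂ ({v300, v210} : Set V3) :=
    Submodule.subset_span (by simp)
  have m2 : v210 ∈ Submodule.span ℂ ({v300, v210} : Set V3) :=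
    Submodule.subset_span (by simp)
  induction hT using Submodule.span_induction with
  | mem x hx =>
    simp only [Set.mem_insert_iff, Set.mem_singleton_iff] at hx
    rcases hx with rfl | rfl
    · rw [d300 X hB.1]; exact Submodule.smul_mem _ _ m1
    · rw [d210 X hB.1]
      exact Submodule.add_mem _ (Submodule.smul_mem _ _ m2) (Submodule.smul_mem _ _ m1)
  | zero => rw [der3_zero]; exact Submodule.zero_mem _
  | add x y hx hy ihx ihy => rw [der3_add]; exact Submodule.add_mem _ ihx ihy
  | smul c x hx ih => rw [der3_smul]; exact Submodule.smul_mem _ _ ih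

lemma invA3 (X : Matrix (Fin 4) (Fin 4) ℂ) (hB : InBorel X) :
    ∀ T ∈ Submodule.span ℂ ({v300, v210, v201} : Set V3),
      der3 X T ∈ Submodule.span ℂ ({v300, v210, v201} : Set V3) := by
  intro T hT
  have m1 : v300 ∈ Submodule.span ℂ ({v300, v210, v201} : Set V3) :=
    Submodule.subset_span (by simp)
  have m2 : v210 ∈ Submodule.span ℂ ({v300, v210, v201} : Set V3) :=
    Submodule.subset_span (by simp)
  have m3 : v201 ∈ Submodule.span ℂ ({v300, v210, v201} : Set V3) :=
    Submodule.subset_span (by simp)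
  induction hT using Submodule.span_induction with
  | mem x hx =>
    simp only [Set.mem_insert_iff, Set.mem_singleton_iff] at hx
    rcases hx with rfl | rfl | rfl
    · rw [d300 X hB.1]; exact Submodule.smul_mem _ _ m1
    · rw [d210 X hB.1]
      exact Submodule.add_mem _ (Submodule.smul_mem _ _ m2) (Submodule.smul_mem _ _ m1)
    · rw [d201 X hB.1]
      exact Submodule.add_mem _ (Submodule.add_mem _ (Submodule.smul_mem _ _ m3)
        (Submodule.smul_mem _ _ m2)) (Submodule.smul_mem _ _ m1)
  | zero => rw [der3_zero]; exact Submodule.zero_mem _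
  | add x y hx hy ihx ihy => rw [der3_add]; exact Submodule.add_mem _ ihx ihy
  | smul c x hx ih => rw [der3_smul]; exact Submodule.smul_mem _ _ ih

lemma invB3 (X : Matrix (Fin 4) (Fin 4) ℂ) (hB : InBorel X) :
    ∀ T ∈ Submodule.span ℂ ({v300, v210, v120} : Set V3),
      der3 X T ∈ Submodule.span ℂ ({v300, v210, v120} : Set V3) := by
  intro T hT
  have m1 : v300 ∈ Submodule.span ℂ ({v300, v210, v120} : Set V3) :=
    Submodule.subset_span (by simp)
  have m2 : v210 ∈ Submodule.span ℂ ({v300, v210, v120} : Set V3) :=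
    Submodule.subset_span (by simp)
  have m3 : v120 ∈ Submodule.span ℂ ({v300, v210, v120} : Set V3) :=
    Submodule.subset_span (by simp)
  induction hT using Submodule.span_induction with
  | mem x hx =>
    simp only [Set.mem_insert_iff, Set.mem_singleton_iff] at hx
    rcases hx with rfl | rfl | rfl
    · rw [d300 X hB.1]; exact Submodule.smul_mem _ _ m1
    · rw [d210 X hB.1]
      exact Submodule.add_mem _ (Submodule.smul_mem _ _ m2) (Submodule.smul_mem _ _ m1)
    · rw [d120 X hB.1]
      exact Submodule.add_mem _ (Submodule.smul_mem _ _ m3) (Submodule.smul_mem _ _ m2)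
  | zero => rw [der3_zero]; exact Submodule.zero_mem _
  | add x y hx hy ihx ihy => rw [der3_add]; exact Submodule.add_mem _ ihx ihy
  | smul c x hx ih => rw [der3_smul]; exact Submodule.smul_mem _ _ ih

end BorelS3

open BorelS3 in
/-- In `S³(ℂ⁴)` with the `𝔟`-action by derivations, there is exactly one `𝔟`-invariant
subspace of dimension `1` (the span of `e₁³`), exactly one of dimension `2` (the span of
`{e₁³, e₁²e₂}`), and exactly two of dimension `3` (the spans of `{e₁³, e₁²e₂, e₁²e₃}` and
of `{e₁³, e₁²e₂, e₁e₂²}`). -/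
theorem borel_invariant_subspaces_S3 :
    ({W : Submodule ℂ (Fin 4 → Fin 4 → Fin 4 → ℂ) | W ≤ Sym3 ∧
        (∀ X, InBorel X → ∀ T ∈ W, der3 X T ∈ W) ∧ Module.finrank ℂ W = 1}
      = {Submodule.span ℂ {v300}}) ∧
    ({W : Submodule ℂ (Fin 4 → Fin 4 → Fin 4 → ℂ) | W ≤ Sym3 ∧
        (∀ X, InBorel X → ∀ T ∈ W, der3 X T ∈ W) ∧ Module.finrank ℂ W = 2}
      = {Submodule.span ℂ {v300, v210}}) ∧
    ({W : Submodule ℂ (Fin 4 → Fin 4 → Fin 4 → ℂ) | W ≤ Sym3 ∧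
        (∀ X, InBorel X → ∀ T ∈ W, der3 X T ∈ W) ∧ Module.finrank ℂ W = 3}
      = {Submodule.span ℂ {v300, v210, v201}, Submodule.span ℂ {v300, v210, v120}}) ∧
    Submodule.span ℂ {v300, v210, v201} ≠ Submodule.span ℂ ({v300, v210, v120} :
      Set (Fin 4 → Fin 4 → Fin 4 → ℂ)) := by
  have fwd : ∀ (W : Submodule ℂ V3), W ≤ Sym3 →
      (∀ X, InBorel X → ∀ T ∈ W, der3 X T ∈ W) →
      W = Submodule.span ℂ (mono '' ↑(Sset W)) ∧
      (Sset W).card = Module.finrank ℂ W ∧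
      (∀ m ∈ Sset W, ∀ a b : Fin 4, pair3 a b → cnt b m ≠ 0 → tgt a b m ∈ Sset W) := by
    intro W hWS hWinv
    have hWH : ∀ T ∈ W, der3 Hmat T ∈ W := fun T hT => hWinv Hmat inBorel_Hmat T hT
    have hspan := W_eq_span W hWS hWH
    refine ⟨hspan, ?_, Sclosed W hWinv⟩
    conv_rhs => rw [hspan]
    exact (finrank_span_mono _ (Sset_sorted W)).symm
  refine ⟨?_, ?_, ?_, ?_⟩
  · -- dimension 1
    ext W
    simp only [Set.mem_setOf_eq, Set.mem_singleton_iff]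
    constructor
    · rintro ⟨hWS, hWinv, hrk⟩
      obtain ⟨hspan, hcard, hcl⟩ := fwd W hWS hWinv
      rw [hrk] at hcard
      have hne : (Sset W).Nonempty := Finset.card_pos.mp (by omega)
      have h000 := S000 _ hcl hne
      obtain ⟨a, ha⟩ := Finset.card_eq_one.mp hcard
      rw [ha, Finset.mem_singleton] at h000
      rw [hspan, ha, ← h000]
      simp [v300_eq]
    · rintro rfl
      exact ⟨Submodule.span_le.mpr (by rintro x rfl; exact v300_mem), invA1, frA1⟩
  · -- dimension 2
    ext W
    simp only [Set.mem_setOf_eq, Set.mem_singleton_iff]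
    constructor
    · rintro ⟨hWS, hWinv, hrk⟩
      obtain ⟨hspan, hcard, hcl⟩ := fwd W hWS hWinv
      rw [hrk] at hcard
      have hsub : Sset W ⊆ ({(0,0,0), (0,0,1)} : Finset T3) := by
        intro m hm
        have hb := ht_le _ hcl m hm
        rw [hcard] at hb
        rcases ht_le1_cases m (Sset_sorted W m hm) (by omega) with rfl | rfl <;> simp
      have heq : Sset W = ({(0,0,0), (0,0,1)} : Finset T3) :=
        Finset.eq_of_subset_of_card_le hsub (by rw [hcard]; decide)
      rw [hspan, heq]
      simp [v300_eq, v210_eq, Set.image_insert_eq]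
    · rintro rfl
      refine ⟨Submodule.span_le.mpr ?_, invA2, frA2⟩
      rintro x hx
      simp only [Set.mem_insert_iff, Set.mem_singleton_iff] at hx
      rcases hx with rfl | rfl
      exacts [v300_mem, v210_mem]
  · -- dimension 3
    ext W
    simp only [Set.mem_setOf_eq, Set.mem_insert_iff, Set.mem_singleton_iff]
    constructor
    · rintro ⟨hWS, hWinv, hrk⟩
      obtain ⟨hspan, hcard, hcl⟩ := fwd W hWS hWinv
      rw [hrk] at hcard
      have hne : (Sset W).Nonempty := Finset.card_pos.mp (by omega)
      have h000 := S000 _ hcl hne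
      have h001of002 : ((0,0,2) : T3) ∈ Sset W → ((0,0,1) : T3) ∈ Sset W := by
        intro h
        have h1 := hcl _ h 1 2 (Or.inr (Or.inl rfl)) (by decide)
        rwa [show tgt 1 2 ((0,0,2) : T3) = (0,0,1) by decide] at h1
      have h001of011 : ((0,1,1) : T3) ∈ Sset W → ((0,0,1) : T3) ∈ Sset W := by
        intro h
        have h1 := hcl _ h 0 1 (Or.inl rfl) (by decide)
        rwa [show tgt 0 1 ((0,1,1) : T3) = (0,0,1) by decide] at h1
      have hsub4 : ∀ m ∈ Sset W,
          m = (0,0,0) ∨ m = (0,0,1) ∨ m = (0,0,2) ∨ m = (0,1,1) := by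
        intro m hm
        have hb := ht_le _ hcl m hm
        rw [hcard] at hb
        exact ht_le2_cases m (Sset_sorted W m hm) (by omega)
      by_cases h2 : ((0,0,2) : T3) ∈ Sset W <;> by_cases h3 : ((0,1,1) : T3) ∈ Sset W
      · exfalso
        have hsub : ({(0,0,0), (0,0,1), (0,0,2), (0,1,1)} : Finset T3) ⊆ Sset W := by
          intro m hm
          simp only [Finset.mem_insert, Finset.mem_singleton] at hm
          rcases hm with rfl | rfl | rfl | rfl
          exacts [h000, h001of002 h2, h2, h3]
        have hc4 := Finset.card_le_card hsub
        rw [hcard] at hc4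
        have : ({(0,0,0), (0,0,1), (0,0,2), (0,1,1)} : Finset T3).card = 4 := by decide
        omega
      · left
        have hsub : ({(0,0,0), (0,0,1), (0,0,2)} : Finset T3) ⊆ Sset W := by
          intro m hm
          simp only [Finset.mem_insert, Finset.mem_singleton] at hm
          rcases hm with rfl | rfl | rfl
          exacts [h000, h001of002 h2, h2]
        have heq : ({(0,0,0), (0,0,1), (0,0,2)} : Finset T3) = Sset W :=
          Finset.eq_of_subset_of_card_le hsub (by rw [hcard]; decide)
        rw [hspan, ← heq]
        simp [v300_eq, v210_eq, v201_eq, Set.image_insert_eq]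
      · right
        have hsub : ({(0,0,0), (0,0,1), (0,1,1)} : Finset T3) ⊆ Sset W := by
          intro m hm
          simp only [Finset.mem_insert, Finset.mem_singleton] at hm
          rcases hm with rfl | rfl | rfl
          exacts [h000, h001of011 h3, h3]
        have heq : ({(0,0,0), (0,0,1), (0,1,1)} : Finset T3) = Sset W :=
          Finset.eq_of_subset_of_card_le hsub (by rw [hcard]; decide)
        rw [hspan, ← heq]
        simp [v300_eq, v210_eq, v120_eq, Set.image_insert_eq]
      · exfalso
        have hsub : Sset W ⊆ ({(0,0,0), (0,0,1)} : Finset T3) := by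
          intro m hm
          rcases hsub4 m hm with rfl | rfl | rfl | rfl
          · simp
          · simp
          · exact absurd hm h2
          · exact absurd hm h3
        have hc2 := Finset.card_le_card hsub
        rw [hcard] at hc2
        have : ({(0,0,0), (0,0,1)} : Finset T3).card = 2 := by decide
        omega
    · rintro (rfl | rfl)
      · refine ⟨Submodule.span_le.mpr ?_, invA3, frA3⟩
        rintro x hx
        simp only [Set.mem_insert_iff, Set.mem_singleton_iff] at hx
        rcases hx with rfl | rfl | rfl
        exacts [v300_mem, v210_mem, v201_mem]
      · refine ⟨Submodule.span_le.mpr ?_, invB3, frB3⟩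
        rintro x hx
        simp only [Set.mem_insert_iff, Set.mem_singleton_iff] at hx
        rcases hx with rfl | rfl | rfl
        exacts [v300_mem, v210_mem, v120_mem]
  · -- the two 3-dimensional spaces differ
    intro heq
    have hker : Submodule.span ℂ ({v300, v210, v120} : Set V3)
        ≤ LinearMap.ker (ev3 0 0 2) := by
      rw [Submodule.span_le]
      rintro x hx
      simp only [Set.mem_insert_iff, Set.mem_singleton_iff] at hx
      rcases hx with rfl | rfl | rfl <;>
        · rw [SetLike.mem_coe, LinearMap.mem_ker]
          simp [ev3, v300, v210, v120]
    have hv : v201 ∈ Submodule.span ℂ ({v300, v210, v120} : Set V3) := by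
      rw [← heq]
      exact Submodule.subset_span (by simp)
    have h0 := hker hv
    rw [LinearMap.mem_ker] at h0
    simp [ev3, v201] at h0
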